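/- arXiv:1801.10306 — 4 statements merged into one kernel-verified Lean document; each statement's English description precedes it below -/
import Mathlib

section
/- Let $A$ be a doubly stochastic matrix of order $n$ (an $n \times n$ real matrix with nonnegative entries whose every row sum and every column sum equals $1$), with $n \geq 1$. Then the permanent of $A$ is strictly greater than zero. -/
/-- The permanent of an `n × n` real matrix. -/
def matPerm {n : ℕ} (A : Fin n → Fin n → ℝ) : ℝ :=
  ∑ σ : Equiv.Perm (Fin n), ∏ i : Fin n, A i (σ i)

/-- The permanent of every doubly stochastic matrix of order `n ≥ 1` is positive. -/
theorem doubly_stochastic_perm_pos (n : ℕ) (hn : 1 ≤ n)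
    (A : Fin n → Fin n → ℝ)
    (hnonneg : ∀ i j, 0 ≤ A i j)
    (hrow : ∀ i, ∑ j, A i j = 1)
    (hcol : ∀ j, ∑ i, A i j = 1) :
    0 < matPerm A := by
  have hM : (Matrix.of A) ∈ doublyStochastic ℝ (Fin n) := by
    rw [mem_doublyStochastic_iff_sum]
    exact ⟨hnonneg, hrow, hcol⟩
  obtain ⟨w, hw0, hw1, hwsum⟩ :=
    exists_eq_sum_perm_of_mem_doublyStochastic hM
  -- find σ with w σ > 0
  obtain ⟨σ, -, hσ⟩ : ∃ σ ∈ Finset.univ, 0 < w σ := by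
    by_contra h
    push_neg at h
    have : ∑ σ, w σ = 0 := Finset.sum_eq_zero fun σ _ =>
      le_antisymm (h σ (Finset.mem_univ σ)) (hw0 σ)
    rw [hw1] at this; norm_num at this
  have hentry : ∀ i, w σ ≤ A i (σ i) := by
    intro i
    have h1 := congrFun (congrFun hwsum i) (σ i)
    simp only [Matrix.sum_apply, Matrix.smul_apply, smul_eq_mul, Matrix.of_apply,
      Equiv.Perm.permMatrix, PEquiv.toMatrix_apply, Equiv.toPEquiv_apply,
      Option.mem_def, Option.some.injEq, mul_ite, mul_one, mul_zero] at h1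
    rw [← h1]
    have := Finset.single_le_sum (f := fun τ : Equiv.Perm (Fin n) =>
      if τ i = σ i then w τ else 0)
      (fun τ _ => by split <;> simp [hw0 τ]) (Finset.mem_univ σ)
    simpa using this
  have hprod : 0 < ∏ i : Fin n, A i (σ i) :=
    Finset.prod_pos fun i _ => lt_of_lt_of_le hσ (hentry i)
  have : 0 < matPerm A := by
    unfold matPerm
    apply lt_of_lt_of_le hprod
    exact Finset.single_le_sum (f := fun τ : Equiv.Perm (Fin n) =>
      ∏ i, A i (τ i)) (fun τ _ => Finset.prod_nonneg fun i _ => hnonneg _ _)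
      (Finset.mem_univ σ)
  exact this
end

section
/- Up to equivalence, the $4 \times 3$ row-latin rectangle $T$ with rows $(1,2,3)$, $(1,2,3)$, $(2,3,1)$, $(2,3,1)$ (i.e., $T(i,j) = j$ for $i \in \{0,1\}$ and $T(i,j) = j+1 \bmod 3$ for $i \in \{2,3\}$, with symbols in $\mathrm{Fin}\,3$) is the unique $4 \times 3$ row-latin rectangle with no transversals: every $4 \times 3$ row-latin rectangle that has no transversal is equivalent to $T$. -/
/-- A `4 × 3` row-latin rectangle: each row is a bijection of `Fin 3`. -/
def RowLatin (R : Fin 4 → Fin 3 → Fin 3) : Prop :=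
  ∀ i, Function.Bijective (R i)

/-- A transversal of a `4 × 3` rectangle: three entries hitting each row, each
column and each symbol at most once. -/
def HasTransversal (R : Fin 4 → Fin 3 → Fin 3) : Prop :=
  ∃ (ρ : Fin 3 → Fin 4) (c : Equiv.Perm (Fin 3)),
    Function.Injective ρ ∧ Function.Injective (fun k => R (ρ k) (c k))

/-- Equivalence of `4 × 3` rectangles by row, column and symbol permutations. -/
def RectEquiv (R R' : Fin 4 → Fin 3 → Fin 3) : Prop :=
  ∃ (π : Equiv.Perm (Fin 4)) (c : Equiv.Perm (Fin 3)) (s : Equiv.Perm (Fin 3)),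
    ∀ i j, R' i j = s (R (π i) (c j))

/-- The rectangle with rows `(1,2,3), (1,2,3), (2,3,1), (2,3,1)`
(with symbols written as `0,1,2` in `Fin 3`). -/
def T : Fin 4 → Fin 3 → Fin 3 :=
  ![![0, 1, 2], ![0, 1, 2], ![1, 2, 0], ![1, 2, 0]]

def p : Fin 6 → Fin 3 → Fin 3 :=
  ![![0,1,2], ![0,2,1], ![1,0,2], ![1,2,0], ![2,0,1], ![2,1,0]]

def pinv : Fin 6 → Fin 6 := ![0,1,2,4,3,5]

def q : Fin 24 → Fin 4 → Fin 4 :=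
  ![![0,1,2,3], ![0,1,3,2], ![0,2,1,3], ![0,2,3,1], ![0,3,1,2], ![0,3,2,1], ![1,0,2,3], ![1,0,3,2], ![1,2,0,3], ![1,2,3,0], ![1,3,0,2], ![1,3,2,0], ![2,0,1,3], ![2,0,3,1], ![2,1,0,3], ![2,1,3,0], ![2,3,0,1], ![2,3,1,0], ![3,0,1,2], ![3,0,2,1], ![3,1,0,2], ![3,1,2,0], ![3,2,0,1], ![3,2,1,0]]

def qinv : Fin 24 → Fin 24 := ![0,1,2,4,3,5,6,7,12,18,13,19,8,10,14,20,16,22,9,11,15,21,17,23]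

/-- `p` as permutations. -/
def pE (k : Fin 6) : Equiv.Perm (Fin 3) :=
  ⟨p k, p (pinv k), by revert k; decide, by revert k; decide⟩

/-- `q` as permutations. -/
def qE (e : Fin 24) : Equiv.Perm (Fin 4) :=
  ⟨q e, q (qinv e), by revert e; decide, by revert e; decide⟩

/-- indexed transversal predicate -/
def HasT' (R : Fin 4 → Fin 3 → Fin 3) : Prop :=
  ∃ (e : Fin 24) (k : Fin 6), Function.Injective (fun t : Fin 3 => R (q e (Fin.castSucc t)) (p k t))

/-- indexed equivalence predicate -/
def RectEquiv' (R R' : Fin 4 → Fin 3 → Fin 3) : Prop :=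
  ∃ (e : Fin 24) (f g : Fin 6), ∀ i j, R' i j = p g (R (q e i) (p f j))

instance : DecidablePred HasT' := fun R => by unfold HasT'; infer_instance
instance : ∀ R R', Decidable (RectEquiv' R R') := fun R R' => by unfold RectEquiv'; infer_instance

lemma rows_eq_p : ∀ f : Fin 3 → Fin 3, Function.Bijective f → ∃ k, f = p k := by
  decide

lemma p_inj (k : Fin 6) : Function.Injective (p k) := (pE k).injective

lemma q_inj (e : Fin 24) : Function.Injective (q e) := (qE e).injective

lemma perm3_eq : ∀ c : Equiv.Perm (Fin 3), ∃ k : Fin 6, ∀ x, c x = p k x := by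
  decide

lemma pinv_comp : ∀ a : Fin 6, (fun x => p (pinv a) (p a x)) = p 0 := by
  decide

set_option maxRecDepth 10000 in
set_option maxHeartbeats 2000000 in
lemma key : ∀ b c d : Fin 6,
    ¬ HasT' ![p 0, p b, p c, p d] → RectEquiv' ![p 0, p b, p c, p d] T := by
  decide

/-- Up to equivalence, `T` is the unique `4 × 3` row-latin rectangle with no
transversal. -/
theorem rowLatin_no_transversal_iff_equiv_T
    (R : Fin 4 → Fin 3 → Fin 3) (hR : RowLatin R) (h : ¬ HasTransversal R) :
    RectEquiv R T := by
  obtain ⟨a, ha⟩ := rows_eq_p (R 0) (hR 0)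
  -- normalized rectangle with first row the identity
  set R₂ : Fin 4 → Fin 3 → Fin 3 := fun i j => p (pinv a) (R i j) with hR₂
  have hrow : ∀ i, ∃ k, R₂ i = p k := fun i =>
    rows_eq_p _ (Function.Bijective.comp (pE (pinv a)).bijective (hR i))
  obtain ⟨b, hb⟩ := hrow 1
  obtain ⟨c, hc⟩ := hrow 2
  obtain ⟨d, hd⟩ := hrow 3
  have h0 : R₂ 0 = p 0 := by
    funext x
    have := congrFun (pinv_comp a) x
    simpa [hR₂, ← ha] using this
  have hRfun : R₂ = ![p 0, p b, p c, p d] := by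
    funext i
    fin_cases i
    · exact h0
    · exact hb
    · exact hc
    · exact hd
  -- no transversal transfers
  have hT : ¬ HasT' ![p 0, p b, p c, p d] := by
    rw [← hRfun]
    rintro ⟨e, k, hk⟩
    apply h
    refine ⟨fun t : Fin 3 => q e (Fin.castSucc t), pE k, ?_, ?_⟩
    · intro x y hxy
      have h2 := q_inj e hxy
      exact Fin.ext (by simpa using congrArg Fin.val h2)
    intro x y hxy
    apply hk
    simpa [hR₂, pE] using congrArg (p (pinv a)) hxy
  obtain ⟨e, f, g, hefg⟩ := key b c d hT
  rw [← hRfun] at hefg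
  exact ⟨qE e, pE f, (pE (pinv a)).trans (pE g), fun i j => hefg i j⟩
end

section
/- In a doubly stochastic matrix of order $4$, every positive partial diagonal of length $2$ can be extended to a positive partial diagonal of length $3$: if $A$ is a $4 \times 4$ doubly stochastic matrix, $i_1 \neq i_2$, $j_1 \neq j_2$, $A\,i_1\,j_1 > 0$ and $A\,i_2\,j_2 > 0$, then there exist $i_3 \notin \{i_1, i_2\}$ and $j_3 \notin \{j_1, j_2\}$ with $A\,i_3\,j_3 > 0$. -/
/-- In a doubly stochastic matrix of order 4, every positive partial diagonal of
length 2 extends to a positive partial diagonal of length 3. -/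
theorem extend_positive_partial_diagonal
    (A : Fin 4 → Fin 4 → ℝ)
    (hnonneg : ∀ i j, 0 ≤ A i j)
    (hrow : ∀ i, ∑ j, A i j = 1)
    (hcol : ∀ j, ∑ i, A i j = 1)
    (i₁ i₂ j₁ j₂ : Fin 4) (hi : i₁ ≠ i₂) (hj : j₁ ≠ j₂)
    (h₁ : 0 < A i₁ j₁) (h₂ : 0 < A i₂ j₂) :
    ∃ i₃ j₃, i₃ ≠ i₁ ∧ i₃ ≠ i₂ ∧ j₃ ≠ j₁ ∧ j₃ ≠ j₂ ∧ 0 < A i₃ j₃ := by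
  by_contra hcon
  push_neg at hcon
  have hz : ∀ i j, i ≠ i₁ → i ≠ i₂ → j ≠ j₁ → j ≠ j₂ → A i j = 0 := fun i j a b c d =>
    le_antisymm (hcon i j a b c d) (hnonneg i j)
  set R : Finset (Fin 4) := {i₁, i₂} with hR
  set C : Finset (Fin 4) := {j₁, j₂} with hC
  have hRcard : R.card = 2 := by
    rw [hR, Finset.card_insert_of_notMem (by simp [hi]), Finset.card_singleton]
  have hCcard : C.card = 2 := by
    rw [hC, Finset.card_insert_of_notMem (by simp [hj]), Finset.card_singleton]
  have h1 : ∑ i ∈ Rᶜ, ∑ j, A i j = 2 := by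
    rw [Finset.sum_congr rfl (fun i _ => hrow i), Finset.sum_const, Finset.card_compl,
      hRcard]
    norm_num
  have h2 : ∀ i ∈ Rᶜ, ∑ j ∈ Cᶜ, A i j = 0 := by
    intro i hiR
    apply Finset.sum_eq_zero
    intro j hjC
    simp only [hR, Finset.mem_compl, Finset.mem_insert, Finset.mem_singleton, not_or] at hiR
    simp only [hC, Finset.mem_compl, Finset.mem_insert, Finset.mem_singleton, not_or] at hjC
    exact hz i j hiR.1 hiR.2 hjC.1 hjC.2
  have h3 : ∑ i ∈ Rᶜ, ∑ j ∈ C, A i j = 2 := by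
    calc ∑ i ∈ Rᶜ, ∑ j ∈ C, A i j
        = ∑ i ∈ Rᶜ, (∑ j ∈ C, A i j + ∑ j ∈ Cᶜ, A i j) := by
          apply Finset.sum_congr rfl; intro i hiR; rw [h2 i hiR, add_zero]
      _ = ∑ i ∈ Rᶜ, ∑ j, A i j := by
          apply Finset.sum_congr rfl; intro i hiR; rw [Finset.sum_add_sum_compl]
      _ = 2 := h1
  have h4 : ∑ j ∈ C, ∑ i, A i j = 2 := by
    rw [Finset.sum_congr rfl (fun j _ => hcol j), Finset.sum_const, hCcard]
    norm_num
  have h5 : 0 < ∑ j ∈ C, ∑ i ∈ R, A i j := by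
    have he : ∑ j ∈ C, ∑ i ∈ R, A i j
        = (A i₁ j₁ + A i₂ j₁) + (A i₁ j₂ + A i₂ j₂) := by
      rw [hR, hC, Finset.sum_pair hj, Finset.sum_pair hi, Finset.sum_pair hi]
    nlinarith [hnonneg i₂ j₁, hnonneg i₁ j₂]
  have h6 : ∑ j ∈ C, ∑ i, A i j
      = ∑ j ∈ C, ∑ i ∈ R, A i j + ∑ i ∈ Rᶜ, ∑ j ∈ C, A i j := by
    rw [Finset.sum_comm, ← Finset.sum_add_sum_compl R fun i => ∑ j ∈ C, A i j]
    congr 1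
    exact Finset.sum_comm
  rw [h4, h3] at h6
  linarith
end

section
/- Let $A$ be a $d$-dimensional polystochastic matrix of order $2$ with $d \geq 2$. If the permanent of $A$ equals zero, then $d$ is odd and $A$ coincides, up to permutations of hyperplanes, with the matrix $Z_2^d$ defined by $z_\alpha = 1$ if $\alpha_1 + \cdots + \alpha_d \equiv 0 \pmod 2$ and $z_\alpha = 0$ otherwise; that is, there exists $c \in \{0,1\}$ such that $a_\alpha = 1$ if $\alpha_1 + \cdots + \alpha_d \equiv c \pmod 2$ and $a_\alpha = 0$ otherwise. In particular, every $d$-dimensional polystochastic matrix of order $2$ with $d$ even has a positive permanent. -/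
/-- A multidimensional matrix is polystochastic if all entries are nonnegative
and the sum over every line (all coordinates fixed but one) equals 1. -/
def Polystochastic {d n : ℕ} (A : (Fin d → Fin n) → ℝ) : Prop :=
  (∀ α, 0 ≤ A α) ∧
    ∀ (α : Fin d → Fin n) (j : Fin d), ∑ x : Fin n, A (Function.update α j x) = 1

/-- The permanent of a `d`-dimensional matrix of order `n` (`d > 0`): the sum
over all tuples of permutations whose first component is the identity (i.e.
over all diagonals `(i, σ₂ i, …, σ_d i)`) of the products of the entries. -/
def mper {d n : ℕ} (A : (Fin d → Fin n) → ℝ) (hd : 0 < d) : ℝ :=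
  ∑ σ ∈ Finset.univ.filter
      (fun σ : Fin d → Equiv.Perm (Fin n) => σ ⟨0, hd⟩ = 1),
    ∏ i : Fin n, A (fun j => σ j i)

lemma zmod2_eq_zero_or_one (x : ZMod 2) : x = 0 ∨ x = 1 := by revert x; decide

lemma fin2_eq_zero_or_one (x : Fin 2) : x = 0 ∨ x = 1 := by revert x; decide

lemma sum_ite_one2 {d : ℕ} (j1 : Fin d) :
    ∑ j : Fin d, (if j = j1 then (1 : ZMod 2) else 0) = 1 := by
  simp [Finset.sum_ite_eq']

lemma sum_ite_zero2 {d : ℕ} (j1 : Fin d) :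
    ∑ j : Fin d, (if j = j1 then (0 : ZMod 2) else 1) = (d : ZMod 2) + 1 := by
  have h : ∀ j : Fin d, (if j = j1 then (0 : ZMod 2) else 1)
      = 1 + (if j = j1 then 1 else 0) := by
    intro j; by_cases hjj : j = j1 <;> simp [hjj] <;> decide
  rw [Finset.sum_congr rfl fun j _ => h j, Finset.sum_add_distrib,
    sum_ite_one2 j1]
  simp

lemma entry_eq {d : ℕ} (A : (Fin d → Fin 2) → ℝ) (hA : Polystochastic A)
    (α : Fin d → Fin 2) :
    A α = if (∑ j : Fin d, ((α j : ℕ) : ZMod 2)) = 0 then A (fun _ => 0)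
          else 1 - A (fun _ => 0) := by
  suffices H : ∀ (m : ℕ) (α : Fin d → Fin 2),
      (Finset.univ.filter fun j => α j = 1).card = m →
      A α = if (∑ j : Fin d, ((α j : ℕ) : ZMod 2)) = 0 then A (fun _ => 0)
          else 1 - A (fun _ => 0) from H _ α rfl
  intro m
  induction m with
  | zero =>
    intro α hcard
    have hα : α = fun _ => 0 := by
      funext k
      rcases fin2_eq_zero_or_one (α k) with h | h
      · exact h
      · exfalso
        have hk : k ∈ Finset.univ.filter fun j => α j = 1 := by simp [h]
        rw [Finset.card_eq_zero] at hcard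
        simp [hcard] at hk
    subst hα
    simp
  | succ m ih =>
    intro α hcard
    have hne : (Finset.univ.filter fun j => α j = 1).Nonempty := by
      rw [← Finset.card_pos, hcard]; omega
    obtain ⟨j, hj⟩ := hne
    have hj1 : α j = 1 := by simpa using hj
    set β := Function.update α j 0 with hβ
    have hβcard : (Finset.univ.filter fun k => β k = 1).card = m := by
      have heq : (Finset.univ.filter fun k => β k = 1)
          = (Finset.univ.filter fun j => α j = 1).erase j := by
        ext k
        by_cases hk : k = j <;>
          simp [hβ, Function.update_apply, hk]
      rw [heq, Finset.card_erase_of_mem hj, hcard]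
      omega
    have hupdate : Function.update α j 1 = α := by
      rw [← hj1]; exact Function.update_eq_self j α
    have hline := hA.2 α j
    rw [Fin.sum_univ_two] at hline
    rw [hupdate] at hline
    have hAα : A α = 1 - A β := by linarith
    have hcast : (fun k => ((β k : ℕ) : ZMod 2)) =
        Function.update (fun k => ((α k : ℕ) : ZMod 2)) j 0 := by
      funext k
      by_cases hk : k = j <;> simp [hβ, Function.update_apply, hk]
    have hpβ : ∑ k : Fin d, ((β k : ℕ) : ZMod 2)
        = ∑ k ∈ Finset.univ \ {j}, ((α k : ℕ) : ZMod 2) := by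
      calc ∑ k : Fin d, ((β k : ℕ) : ZMod 2)
          = ∑ k : Fin d,
              Function.update (fun k => ((α k : ℕ) : ZMod 2)) j 0 k :=
            Finset.sum_congr rfl (fun k _ => congrFun hcast k)
        _ = 0 + ∑ k ∈ Finset.univ \ {j}, ((α k : ℕ) : ZMod 2) :=
            Finset.sum_update_of_mem (Finset.mem_univ j)
              (fun k => ((α k : ℕ) : ZMod 2)) 0
        _ = ∑ k ∈ Finset.univ \ {j}, ((α k : ℕ) : ZMod 2) := zero_add _
    have hpα : ∑ k : Fin d, ((α k : ℕ) : ZMod 2)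
        = 1 + ∑ k ∈ Finset.univ \ {j}, ((α k : ℕ) : ZMod 2) := by
      have hc2 : (fun k => ((α k : ℕ) : ZMod 2)) =
          Function.update (fun k => ((α k : ℕ) : ZMod 2)) j 1 := by
        funext k; by_cases hk : k = j <;> simp [Function.update_apply, hk, hj1]
      calc ∑ k : Fin d, ((α k : ℕ) : ZMod 2)
          = ∑ k : Fin d,
              Function.update (fun k => ((α k : ℕ) : ZMod 2)) j 1 k :=
            Finset.sum_congr rfl (fun k _ => congrFun hc2 k)
        _ = 1 + ∑ k ∈ Finset.univ \ {j}, ((α k : ℕ) : ZMod 2) :=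
            Finset.sum_update_of_mem (Finset.mem_univ j)
              (fun k => ((α k : ℕ) : ZMod 2)) 1
    rw [hAα, ih β hβcard, hpβ, hpα]
    rcases zmod2_eq_zero_or_one (∑ k ∈ Finset.univ \ {j}, ((α k : ℕ) : ZMod 2))
      with hR | hR
    · rw [hR]
      have h1 : (1 + 0 : ZMod 2) ≠ 0 := by decide
      rw [if_pos rfl, if_neg h1]
    · rw [hR]
      have h1 : (1 + 1 : ZMod 2) = 0 := by decide
      have h2 : (1 : ZMod 2) ≠ 0 := by decide
      rw [if_neg h2, if_pos h1]
      ring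

/-- A `d`-dimensional polystochastic matrix of order 2 (`d ≥ 2`) with zero
permanent exists only for odd `d`, and then it coincides, up to permutations of
hyperplanes, with the matrix `Z₂ᵈ`: its entries are 1 exactly on the indices
whose coordinate sum is congruent to a fixed `c` modulo 2. -/
theorem polystochastic_order2_perm_zero (d : ℕ) (hd : 2 ≤ d)
    (A : (Fin d → Fin 2) → ℝ) (hA : Polystochastic A)
    (hper : mper A (by omega) = 0) :
    Odd d ∧ ∃ c : ZMod 2, ∀ α : Fin d → Fin 2,
      A α = if (∑ j : Fin d, ((α j : ℕ) : ZMod 2)) = c then 1 else 0 := by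
  have e10 : (1 : ZMod 2) ≠ 0 := by decide
  have e01 : (0 : ZMod 2) ≠ 1 := by decide
  set t := A (fun _ => 0) with ht
  unfold mper at hper
  have hnn : ∀ σ ∈ Finset.univ.filter
      (fun σ : Fin d → Equiv.Perm (Fin 2) => σ ⟨0, by omega⟩ = 1),
      0 ≤ ∏ i : Fin 2, A (fun j => σ j i) :=
    fun σ _ => Finset.prod_nonneg fun i _ => hA.1 _
  have hzero := (Finset.sum_eq_zero_iff_of_nonneg hnn).mp hper
  -- the all-identity diagonal
  have h1 : A (fun _ => (0 : Fin 2)) * A (fun _ => (1 : Fin 2)) = 0 := by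
    have hm : (fun _ => (1 : Equiv.Perm (Fin 2))) ∈ Finset.univ.filter
        (fun σ : Fin d → Equiv.Perm (Fin 2) => σ ⟨0, by omega⟩ = 1) := by simp
    have := hzero (fun _ => 1) hm
    rw [Fin.prod_univ_two] at this
    simpa using this
  -- the one-swap diagonal
  set j1 : Fin d := ⟨1, by omega⟩ with hj1def
  set σ2 : Fin d → Equiv.Perm (Fin 2) :=
    fun j => if j = j1 then Equiv.swap 0 1 else 1 with hσ2
  have h2 : A (fun j => if j = j1 then (1 : Fin 2) else 0)
      * A (fun j => if j = j1 then (0 : Fin 2) else 1) = 0 := by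
    have hm : σ2 ∈ Finset.univ.filter
        (fun σ : Fin d → Equiv.Perm (Fin 2) => σ ⟨0, by omega⟩ = 1) := by
      simp only [Finset.mem_filter, Finset.mem_univ, true_and, hσ2]
      rw [if_neg]
      simp [hj1def, Fin.ext_iff]
    have := hzero σ2 hm
    rw [Fin.prod_univ_two] at this
    have e0 : (fun j => σ2 j 0) = fun j => if j = j1 then (1 : Fin 2) else 0 := by
      funext j; by_cases hjj : j = j1 <;> simp [hσ2, hjj]
    have e1 : (fun j => σ2 j 1) = fun j => if j = j1 then (0 : Fin 2) else 1 := by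
      funext j; by_cases hjj : j = j1 <;> simp [hσ2, hjj]
    rw [e0, e1] at this
    exact this
  have hA1 : A (fun _ => (1 : Fin 2))
      = if (d : ZMod 2) = 0 then t else 1 - t := by
    rw [entry_eq A hA]
    simp [ht]
  have hAσ0 : A (fun j => if j = j1 then (1 : Fin 2) else 0) = 1 - t := by
    rw [entry_eq A hA]
    simp only [apply_ite Fin.val, apply_ite (Nat.cast : ℕ → ZMod 2), Fin.val_one,
      Fin.val_zero, Nat.cast_one, Nat.cast_zero]
    rw [sum_ite_one2 j1, if_neg e10]
  have hAσ1 : A (fun j => if j = j1 then (0 : Fin 2) else 1)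
      = if (d : ZMod 2) + 1 = 0 then t else 1 - t := by
    rw [entry_eq A hA]
    simp only [apply_ite Fin.val, apply_ite (Nat.cast : ℕ → ZMod 2), Fin.val_one,
      Fin.val_zero, Nat.cast_one, Nat.cast_zero]
    rw [sum_ite_zero2 j1]
  rcases Nat.even_or_odd d with hev | hodd
  · exfalso
    have hd2 : (d : ZMod 2) = 0 := by
      rw [← ZMod.natCast_mod, Nat.even_iff.mp hev]; simp
    rw [hA1, hd2, if_pos rfl] at h1
    have ht0 : t = 0 := mul_self_eq_zero.mp h1
    rw [hAσ0, hAσ1, hd2, zero_add, if_neg e10] at h2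
    have ht1 : (1 : ℝ) - t = 0 := mul_self_eq_zero.mp h2
    rw [ht0] at ht1
    norm_num at ht1
  · have hd2 : (d : ZMod 2) = 1 := by
      rw [← ZMod.natCast_mod, Nat.odd_iff.mp hodd]; simp
    rw [hA1, hd2, if_neg e10] at h1
    refine ⟨hodd, ?_⟩
    rcases mul_eq_zero.mp h1 with ht0 | ht1
    · refine ⟨1, fun α => ?_⟩
      rw [entry_eq A hA α]
      rcases zmod2_eq_zero_or_one (∑ j : Fin d, ((α j : ℕ) : ZMod 2)) with hp | hp
      · rw [hp, if_pos rfl, if_neg e01]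
        exact ht0
      · rw [hp, if_neg e10, if_pos rfl]
        show (1 : ℝ) - t = 1
        have ht0' : t = 0 := ht0
        rw [ht0']; norm_num
    · have ht1' : t = 1 := by
        have : (1 : ℝ) - t = 0 := ht1
        linarith
      refine ⟨0, fun α => ?_⟩
      rw [entry_eq A hA α]
      rcases zmod2_eq_zero_or_one (∑ j : Fin d, ((α j : ℕ) : ZMod 2)) with hp | hp
      · rw [hp, if_pos rfl, if_pos rfl]
        exact ht1'
      · rw [hp, if_neg e10, if_neg e10]
        show (1 : ℝ) - t = 0
        exact ht1
end
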